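/- arXiv:1311.1597 — 12 statements merged into one kernel-verified Lean document; each statement's English description precedes it below -/
import Mathlib

section
/- Let I ⊆ ℝ be an open interval, M ∈ ℝ, and let u : ℝ → ℝ be three times differentiable on I with u'(x) ≠ 0 on I and u'(x)·u'''(x) − (3/2)·u''(x)² = M·u'(x)² for all x ∈ I. Then the function I₁(x) = (1/2)·u''(x)²/u'(x)³ + M/u'(x) is constant on I. -/
/-- the first integral `I₁ = (1/2)·u''²/u'³ + M/u'` is constant along
solutions of the Schwarzian equation on an open interval. -/
theorem schwarzian_first_integral_I1 (a b M : ℝ) (u : ℝ → ℝ)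
    (hu : ∀ x ∈ Set.Ioo a b, DifferentiableAt ℝ u x)
    (hu' : ∀ x ∈ Set.Ioo a b, DifferentiableAt ℝ (deriv u) x)
    (hu'' : ∀ x ∈ Set.Ioo a b, DifferentiableAt ℝ (deriv (deriv u)) x)
    (hne : ∀ x ∈ Set.Ioo a b, deriv u x ≠ 0)
    (heq : ∀ x ∈ Set.Ioo a b,
        deriv u x * deriv (deriv (deriv u)) x - (3/2) * (deriv (deriv u) x) ^ 2
          = M * (deriv u x) ^ 2) :
    ∀ x ∈ Set.Ioo a b, ∀ y ∈ Set.Ioo a b,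
      (1/2) * (deriv (deriv u) x) ^ 2 / (deriv u x) ^ 3 + M / deriv u x
        = (1/2) * (deriv (deriv u) y) ^ 2 / (deriv u y) ^ 3 + M / deriv u y := by
  set F : ℝ → ℝ := fun x =>
    (1/2) * (deriv (deriv u) x) ^ 2 / (deriv u x) ^ 3 + M / deriv u x with hF
  have key : ∀ x ∈ Set.Ioo a b, HasDerivAt F 0 x := by
    intro x hx
    have hp : HasDerivAt (deriv u) (deriv (deriv u) x) x := (hu' x hx).hasDerivAt
    have hq : HasDerivAt (deriv (deriv u)) (deriv (deriv (deriv u)) x) x :=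
      (hu'' x hx).hasDerivAt
    set p := deriv u x
    set q := deriv (deriv u) x
    set r := deriv (deriv (deriv u)) x
    have hne' : p ≠ 0 := hne x hx
    have h1 := ((hq.pow 2).const_mul (1/2 : ℝ)).div (hp.pow 3) (pow_ne_zero 3 hne')
    have h2 := (hasDerivAt_const x M).div hp hne'
    have h := h1.add h2
    refine (h.congr_deriv ?_ : HasDerivAt _ _ x)
    symm
    simp only [Pi.pow_apply]
    have heqx := heq x hx
    field_simp [hne x hx]
    linear_combination (-2) * q * p ^ 2 * heqx
  have hconv : Convex ℝ (Set.Ioo a b) := convex_Ioo a b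
  have hdiff : DifferentiableOn ℝ F (Set.Ioo a b) := fun x hx =>
    (key x hx).differentiableAt.differentiableWithinAt
  have hzero : ∀ x ∈ Set.Ioo a b, fderivWithin ℝ F (Set.Ioo a b) x = 0 := by
    intro x hx
    have := ((key x hx).hasFDerivAt.hasFDerivWithinAt).fderivWithin
      (isOpen_Ioo.uniqueDiffOn x hx)
    rw [this]
    ext
    simp
  intro x hx y hy
  exact hconv.is_const_of_fderivWithin_eq_zero hdiff hzero hx hy
end

section
/- Let I ⊆ ℝ be an open interval, M ∈ ℝ, and let u : ℝ → ℝ be three times differentiable on I with u'(x) ≠ 0 on I and u'(x)·u'''(x) − (3/2)·u''(x)² = M·u'(x)² for all x ∈ I. Then the function I₂(x) = u(x)·((1/2)·u''(x)²/u'(x)³ + M/u'(x)) − u''(x)/u'(x) is constant on I. -/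
lemma const_of_hasDerivAt_zero {f : ℝ → ℝ} {a b : ℝ}
    (h : ∀ x ∈ Set.Ioo a b, HasDerivAt f 0 x) :
    ∀ x ∈ Set.Ioo a b, ∀ y ∈ Set.Ioo a b, f x = f y := by
  intro x hx y hy
  apply (convex_Ioo a b).is_const_of_fderivWithin_eq_zero
    (fun z hz => (h z hz).differentiableAt.differentiableWithinAt) ?_ hx hy
  intro z hz
  rw [fderivWithin_eq_fderiv (isOpen_Ioo.uniqueDiffWithinAt hz) (h z hz).differentiableAt,
    (h z hz).hasFDerivAt.fderiv]
  ext; simp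

/-- the first integral `I₂ = u·((1/2)·u''²/u'³ + M/u') − u''/u'` is
constant along solutions of the Schwarzian equation on an open interval. -/
theorem schwarzian_first_integral_I2 (a b M : ℝ) (u : ℝ → ℝ)
    (hu : ∀ x ∈ Set.Ioo a b, DifferentiableAt ℝ u x)
    (hu' : ∀ x ∈ Set.Ioo a b, DifferentiableAt ℝ (deriv u) x)
    (hu'' : ∀ x ∈ Set.Ioo a b, DifferentiableAt ℝ (deriv (deriv u)) x)
    (hne : ∀ x ∈ Set.Ioo a b, deriv u x ≠ 0)
    (heq : ∀ x ∈ Set.Ioo a b,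
        deriv u x * deriv (deriv (deriv u)) x - (3/2) * (deriv (deriv u) x) ^ 2
          = M * (deriv u x) ^ 2) :
    ∀ x ∈ Set.Ioo a b, ∀ y ∈ Set.Ioo a b,
      u x * ((1/2) * (deriv (deriv u) x) ^ 2 / (deriv u x) ^ 3 + M / deriv u x)
          - deriv (deriv u) x / deriv u x
        = u y * ((1/2) * (deriv (deriv u) y) ^ 2 / (deriv u y) ^ 3 + M / deriv u y)
          - deriv (deriv u) y / deriv u y := by
  apply const_of_hasDerivAt_zero
  intro z hz
  have hd1 : HasDerivAt u (deriv u z) z := (hu z hz).hasDerivAt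
  have hd2 : HasDerivAt (deriv u) (deriv (deriv u) z) z := (hu' z hz).hasDerivAt
  have hd3 : HasDerivAt (deriv (deriv u)) (deriv (deriv (deriv u)) z) z := (hu'' z hz).hasDerivAt
  have hne' := hne z hz
  have hcube : (deriv u z) ^ 3 ≠ 0 := pow_ne_zero _ hne'
  have H := (hd1.mul ((((hd3.pow 2).const_mul ((1:ℝ)/2)).div (hd2.pow 3) hcube).add
      ((hasDerivAt_const z M).div hd2 hne'))).sub (hd3.div hd2 hne')
  convert H using 1
  · rfl
  · rfl
  · rfl
  simp only [Pi.add_apply, Pi.sub_apply, Pi.mul_apply, Pi.div_apply, Pi.pow_apply]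
  have he := heq z hz
  set U := u z
  set p := deriv u z
  set q := deriv (deriv u) z
  set r := deriv (deriv (deriv u)) z
  field_simp
  linear_combination (-2*U*q*p^2 + 2*p^4) * he
end

section
/- Let I ⊆ ℝ be an open interval, M ∈ ℝ, and let u : ℝ → ℝ be three times differentiable on I with u'(x) ≠ 0 on I and u'(x)·u'''(x) − (3/2)·u''(x)² = M·u'(x)² for all x ∈ I. Then the function I₃(x) = u(x)²·((1/2)·u''(x)²/u'(x)³ + M/u'(x)) − 2·u(x)·u''(x)/u'(x) + 2·u'(x) is constant on I. -/
/-- the first integral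
`I₃ = u²·((1/2)·u''²/u'³ + M/u') − 2u·u''/u' + 2u'` is constant along solutions of
the Schwarzian equation on an open interval. -/
theorem schwarzian_first_integral_I3 (a b M : ℝ) (u : ℝ → ℝ)
    (hu : ∀ x ∈ Set.Ioo a b, DifferentiableAt ℝ u x)
    (hu' : ∀ x ∈ Set.Ioo a b, DifferentiableAt ℝ (deriv u) x)
    (hu'' : ∀ x ∈ Set.Ioo a b, DifferentiableAt ℝ (deriv (deriv u)) x)
    (hne : ∀ x ∈ Set.Ioo a b, deriv u x ≠ 0)
    (heq : ∀ x ∈ Set.Ioo a b,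
        deriv u x * deriv (deriv (deriv u)) x - (3/2) * (deriv (deriv u) x) ^ 2
          = M * (deriv u x) ^ 2) :
    ∀ x ∈ Set.Ioo a b, ∀ y ∈ Set.Ioo a b,
      (u x) ^ 2 * ((1/2) * (deriv (deriv u) x) ^ 2 / (deriv u x) ^ 3 + M / deriv u x)
          - 2 * u x * deriv (deriv u) x / deriv u x + 2 * deriv u x
        = (u y) ^ 2 * ((1/2) * (deriv (deriv u) y) ^ 2 / (deriv u y) ^ 3 + M / deriv u y)
          - 2 * u y * deriv (deriv u) y / deriv u y + 2 * deriv u y := by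
  set s := Set.Ioo a b
  set F : ℝ → ℝ := fun x =>
    (u x) ^ 2 * ((1/2) * (deriv (deriv u) x) ^ 2 / (deriv u x) ^ 3 + M / deriv u x)
      - 2 * u x * deriv (deriv u) x / deriv u x + 2 * deriv u x with hF
  have key : ∀ x ∈ s, HasDerivAt F 0 x := by
    intro x hx
    have h0 : HasDerivAt u (deriv u x) x := (hu x hx).hasDerivAt
    have h1 : HasDerivAt (deriv u) (deriv (deriv u) x) x := (hu' x hx).hasDerivAt
    have h2 : HasDerivAt (deriv (deriv u)) (deriv (deriv (deriv u)) x) x :=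
      (hu'' x hx).hasDerivAt
    have hx1 : deriv u x ≠ 0 := hne x hx
    set u0 := u x
    set u1 := deriv u x
    set u2 := deriv (deriv u) x
    set u3 := deriv (deriv (deriv u)) x
    have hx3 : u1 ^ 3 ≠ 0 := pow_ne_zero 3 hx1
    have hA : HasDerivAt (fun y => (1/2) * (deriv (deriv u) y) ^ 2 / (deriv u y) ^ 3 + M / deriv u y)
        ((((1/2) * (2 * u2 ^ 1 * u3)) * u1 ^ 3 - (1/2) * u2 ^ 2 * (3 * u1 ^ 2 * u2)) / (u1 ^ 3) ^ 2
          + (0 * u1 - M * u2) / u1 ^ 2) x := by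
      exact (((h2.pow 2).const_mul (1/2)).div (h1.pow 3) hx3).add
        ((hasDerivAt_const x M).div h1 hx1)
    have hB : HasDerivAt F
        ((2 * u0 ^ 1 * u1) * ((1/2) * u2 ^ 2 / u1 ^ 3 + M / u1)
          + u0 ^ 2 * ((((1/2) * (2 * u2 ^ 1 * u3)) * u1 ^ 3 - (1/2) * u2 ^ 2 * (3 * u1 ^ 2 * u2)) / (u1 ^ 3) ^ 2
            + (0 * u1 - M * u2) / u1 ^ 2)
          - ((2 * u1 * u2 + 2 * u0 * u3) * u1 - 2 * u0 * u2 * u2) / u1 ^ 2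
          + 2 * u2) x := by
      exact (((h0.pow 2).mul hA).sub
        (((h0.const_mul 2).mul h2).div h1 hx1)).add (h1.const_mul 2)
    convert hB using 1
    have heqx : u1 * u3 - (3/2) * u2 ^ 2 = M * u1 ^ 2 := heq x hx
    field_simp
    linear_combination (4*u0*u1^2 - 2*u0^2*u2) * heqx
  intro x hx y hy
  have hconv : Convex ℝ s := convex_Ioo a b
  refine hconv.is_const_of_fderivWithin_eq_zero (fun z hz => ((key z hz).differentiableAt).differentiableWithinAt) (fun z hz => ?_) hx hy
  have := ((key z hz).hasFDerivAt.hasFDerivWithinAt).fderivWithin (isOpen_Ioo.uniqueDiffOn z hz)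
  rw [this]
  ext
  simp
end

section
/- Let I ⊆ ℝ be an open interval and let u : ℝ → ℝ be three times differentiable on I with u'(x) ≠ 0 on I and u'(x)·u'''(x) − (3/2)·u''(x)² = 0 for all x ∈ I. Then the function I₁ᵦ(x) = (x/2)·u''(x)²/u'(x)³ + u''(x)/u'(x)² is constant on I. -/
/-- for the Schwarzian equation with `M = 0`, the explicitly
`x`-dependent first integral `I₁ᵦ = (x/2)·u''²/u'³ + u''/u'²` is constant on `I`. -/
theorem schwarzian_first_integral_I1b (a b : ℝ) (u : ℝ → ℝ)
    (hu : ∀ x ∈ Set.Ioo a b, DifferentiableAt ℝ u x)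
    (hu' : ∀ x ∈ Set.Ioo a b, DifferentiableAt ℝ (deriv u) x)
    (hu'' : ∀ x ∈ Set.Ioo a b, DifferentiableAt ℝ (deriv (deriv u)) x)
    (hne : ∀ x ∈ Set.Ioo a b, deriv u x ≠ 0)
    (heq : ∀ x ∈ Set.Ioo a b,
        deriv u x * deriv (deriv (deriv u)) x - (3/2) * (deriv (deriv u) x) ^ 2 = 0) :
    ∀ x ∈ Set.Ioo a b, ∀ y ∈ Set.Ioo a b,
      (x / 2) * (deriv (deriv u) x) ^ 2 / (deriv u x) ^ 3
          + deriv (deriv u) x / (deriv u x) ^ 2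
        = (y / 2) * (deriv (deriv u) y) ^ 2 / (deriv u y) ^ 3
          + deriv (deriv u) y / (deriv u y) ^ 2 := by
  set F : ℝ → ℝ := fun x =>
    (x / 2) * (deriv (deriv u) x) ^ 2 / (deriv u x) ^ 3
      + deriv (deriv u) x / (deriv u x) ^ 2 with hF
  have key : ∀ x ∈ Set.Ioo a b, HasDerivAt F 0 x := by
    intro x hx
    have h1 : HasDerivAt (deriv u) (deriv (deriv u) x) x := (hu' x hx).hasDerivAt
    have h2 : HasDerivAt (deriv (deriv u)) (deriv (deriv (deriv u)) x) x :=
      (hu'' x hx).hasDerivAt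
    have hid : HasDerivAt (fun x : ℝ => x / 2) (1 / 2) x := by
      simpa using (hasDerivAt_id x).div_const 2
    have hne1 := hne x hx
    have hne3 : (deriv u x) ^ 3 ≠ 0 := pow_ne_zero _ hne1
    have hne2 : (deriv u x) ^ 2 ≠ 0 := pow_ne_zero _ hne1
    have hD := (((hid.mul (h2.pow 2)).div (h1.pow 3) hne3).add
      (h2.div (h1.pow 2) hne2))
    have heqx := heq x hx
    convert hD using 1
    case e'_4 => rfl
    case e'_5 => rfl
    case e'_8 => rfl
    have h3 : deriv (deriv (deriv u)) x
        = (3/2) * (deriv (deriv u) x) ^ 2 / deriv u x := by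
      field_simp
      linarith
    rw [h3]
    simp only [Pi.pow_apply, Pi.mul_apply]
    field_simp
    ring
  intro x hx y hy
  have hconv : Convex ℝ (Set.Ioo a b) := convex_Ioo a b
  have hdiff : DifferentiableOn ℝ F (Set.Ioo a b) := fun z hz =>
    ((key z hz).differentiableAt).differentiableWithinAt
  have hfd : ∀ z ∈ Set.Ioo a b, fderivWithin ℝ F (Set.Ioo a b) z = 0 := by
    intro z hz
    rw [fderivWithin_of_isOpen isOpen_Ioo hz, (key z hz).hasFDerivAt.fderiv]
    ext
    simp
  exact hconv.is_const_of_fderivWithin_eq_zero hdiff hfd hx hy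
end

section
/- Let u : ℝ → ℝ be twice differentiable with u''(x) + u(x) = 0 for all x ∈ ℝ. Then the function I₅(x) = (u'(x)² − u(x)²)·sin(2x) − 2·u(x)·u'(x)·cos(2x) is constant on ℝ. -/
/-- for the harmonic oscillator `u'' + u = 0`, the quantity
`I₅ = (u'² − u²)·sin 2x − 2·u·u'·cos 2x` is constant on `ℝ`. -/
theorem harmonic_oscillator_first_integral_I5 (u : ℝ → ℝ)
    (hu : ∀ x : ℝ, DifferentiableAt ℝ u x)
    (hu' : ∀ x : ℝ, DifferentiableAt ℝ (deriv u) x)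
    (heq : ∀ x : ℝ, deriv (deriv u) x + u x = 0) :
    ∀ x y : ℝ,
      ((deriv u x) ^ 2 - (u x) ^ 2) * Real.sin (2 * x)
          - 2 * u x * deriv u x * Real.cos (2 * x)
        = ((deriv u y) ^ 2 - (u y) ^ 2) * Real.sin (2 * y)
          - 2 * u y * deriv u y * Real.cos (2 * y) := by
  set I : ℝ → ℝ := fun x =>
    ((deriv u x) ^ 2 - (u x) ^ 2) * Real.sin (2 * x)
      - 2 * u x * deriv u x * Real.cos (2 * x) with hI
  have key : ∀ x : ℝ, HasDerivAt I 0 x := by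
    intro x
    have hux : HasDerivAt u (deriv u x) x := (hu x).hasDerivAt
    have hu'x : HasDerivAt (deriv u) (deriv (deriv u) x) x := (hu' x).hasDerivAt
    have hu'' : deriv (deriv u) x = - u x := by linarith [heq x]
    rw [hu''] at hu'x
    have hsin : HasDerivAt (fun x : ℝ => Real.sin (2 * x)) (2 * Real.cos (2 * x)) x := by
      have := (Real.hasDerivAt_sin (2 * x)).comp x (by simpa using (hasDerivAt_id x).const_mul 2 : HasDerivAt (fun y : ℝ => 2 * y) 2 x)
      simpa [Function.comp_def, mul_comm] using this
    have hcos : HasDerivAt (fun x : ℝ => Real.cos (2 * x)) (-(2 * Real.sin (2 * x))) x := by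
      have := (Real.hasDerivAt_cos (2 * x)).comp x (by simpa using (hasDerivAt_id x).const_mul 2 : HasDerivAt (fun y : ℝ => 2 * y) 2 x)
      simpa [Function.comp_def, mul_comm] using this
    have h1 : HasDerivAt (fun x => (deriv u x) ^ 2 - (u x) ^ 2)
        (2 * deriv u x * (- u x) - 2 * u x * deriv u x) x := by
      have := ((hu'x.pow 2).sub (hux.pow 2))
      exact this.congr_deriv (by ring)
    have h2 : HasDerivAt (fun x => 2 * u x * deriv u x)
        (2 * deriv u x * deriv u x + 2 * u x * (- u x)) x := by
      have := ((hux.const_mul 2).mul hu'x)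
      exact this.congr_deriv (by ring)
    have := ((h1.mul hsin).sub (h2.mul hcos))
    exact this.congr_deriv (by ring)
  have hconst : ∀ x y : ℝ, I x = I y := by
    intro x y
    have : I = fun _ => I 0 := by
      funext z
      have := is_const_of_deriv_eq_zero (f := I)
        (fun t => (key t).differentiableAt) (fun t => (key t).deriv) z 0
      exact this
    rw [this]
  intro x y
  exact hconst x y
end

section
/- Let K ≠ 0 be a real constant and let u : ℤ → ℝ satisfy, for all m ∈ ℤ: u(m+1) ≠ u(m), u(m+2) ≠ u(m), u(m+2) ≠ u(m+1), and (u(m+3) − u(m+1))·(u(m+2) − u(m)) = K·(u(m+3) − u(m+2))·(u(m+1) − u(m)). Then the function J₁(m) = 2·(K/(u(m+2) − u(m)) − 1/(u(m+2) − u(m+1)) − 1/(u(m+1) − u(m))) is independent of m, i.e., J₁(m+1) = J₁(m) for all m ∈ ℤ. -/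
/-- the quantity
`J₁(m) = 2·(K/(u(m+2) − u(m)) − 1/(u(m+2) − u(m+1)) − 1/(u(m+1) − u(m)))`
is a first integral of the four-point discrete Schwarzian equation. -/
theorem discrete_schwarzian_first_integral_J1 (K : ℝ) (hK : K ≠ 0) (u : ℤ → ℝ)
    (h1 : ∀ m : ℤ, u (m + 1) ≠ u m)
    (h2 : ∀ m : ℤ, u (m + 2) ≠ u m)
    (h3 : ∀ m : ℤ, u (m + 2) ≠ u (m + 1))
    (heq : ∀ m : ℤ, (u (m + 3) - u (m + 1)) * (u (m + 2) - u m)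
        = K * (u (m + 3) - u (m + 2)) * (u (m + 1) - u m)) :
    ∀ m : ℤ,
      2 * (K / (u (m + 1 + 2) - u (m + 1)) - 1 / (u (m + 1 + 2) - u (m + 1 + 1))
            - 1 / (u (m + 1 + 1) - u (m + 1)))
        = 2 * (K / (u (m + 2) - u m) - 1 / (u (m + 2) - u (m + 1))
            - 1 / (u (m + 1) - u m)) := by
  intro m
  have e1 : m + 1 + 2 = m + 3 := by ring
  have e2 : m + 1 + 1 = m + 2 := by ring
  rw [e1, e2]
  have hdb : u (m + 3) - u (m + 1) ≠ 0 := by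
    have := h2 (m + 1); rw [e1] at this; exact sub_ne_zero.mpr this
  have hdc : u (m + 3) - u (m + 2) ≠ 0 := by
    have := h1 (m + 2); have e3 : m + 2 + 1 = m + 3 := by ring
    rw [e3] at this; exact sub_ne_zero.mpr this
  have hcb : u (m + 2) - u (m + 1) ≠ 0 := sub_ne_zero.mpr (h3 m)
  have hca : u (m + 2) - u m ≠ 0 := sub_ne_zero.mpr (h2 m)
  have hba : u (m + 1) - u m ≠ 0 := sub_ne_zero.mpr (h1 m)
  have h := heq m
  have key : K / (u (m + 3) - u (m + 1)) - 1 / (u (m + 3) - u (m + 2))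
      = K / (u (m + 2) - u m) - 1 / (u (m + 1) - u m) := by
    field_simp
    linear_combination (u (m + 3) - u (m + 2) - u (m + 1) + u m) * h
  linarith [key]
end

section
/- Let K be a real constant and let u₀, u₁, u₂ be real numbers with u₁ ≠ u₀, u₂ ≠ u₀, u₂ ≠ u₁. Define J₁ = 2·(K/(u₂ − u₀) − 1/(u₂ − u₁) − 1/(u₁ − u₀)), J₂ = K·(u₂ + u₀)/(u₂ − u₀) − 2u₁/(u₂ − u₁) − 2u₁/(u₁ − u₀), and J₃ = 2·(K·u₂·u₀/(u₂ − u₀) − u₁²/(u₂ − u₁) − u₁²/(u₁ − u₀)). Then J₁·J₃ − J₂² = 4K − K². -/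
/-- the algebraic relation `J₁·J₃ − J₂² = 4K − K²` among the three
first integrals of the four-point discrete Schwarzian equation. -/
theorem discrete_schwarzian_integrals_relation (K u₀ u₁ u₂ : ℝ)
    (h10 : u₁ ≠ u₀) (h20 : u₂ ≠ u₀) (h21 : u₂ ≠ u₁) :
    (2 * (K / (u₂ - u₀) - 1 / (u₂ - u₁) - 1 / (u₁ - u₀))) *
        (2 * (K * u₂ * u₀ / (u₂ - u₀) - u₁ ^ 2 / (u₂ - u₁) - u₁ ^ 2 / (u₁ - u₀)))
      - (K * (u₂ + u₀) / (u₂ - u₀) - 2 * u₁ / (u₂ - u₁) - 2 * u₁ / (u₁ - u₀)) ^ 2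
      = 4 * K - K ^ 2 := by
  have h1 : u₁ - u₀ ≠ 0 := sub_ne_zero.mpr h10
  have h2 : u₂ - u₀ ≠ 0 := sub_ne_zero.mpr h20
  have h3 : u₂ - u₁ ≠ 0 := sub_ne_zero.mpr h21
  field_simp
  ring
end

section
/- Let u : ℤ → ℝ satisfy, for all m ∈ ℤ: u(m+1) ≠ u(m), u(m+2) ≠ u(m), u(m+2) ≠ u(m+1), and (u(m+3) − u(m+1))·(u(m+2) − u(m)) = 4·(u(m+3) − u(m+2))·(u(m+1) − u(m)). Then either there exist real constants C₁ ≠ 0, C₂, C₃ with C₁m + C₂ ≠ 0 for all m ∈ ℤ such that u(m) = 1/(C₁m + C₂) + C₃ for all m ∈ ℤ, or there exist real constants C₁ ≠ 0 and C₂ such that u(m) = C₁m + C₂ for all m ∈ ℤ. -/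
/-- complete solution of the four-point discrete Schwarzian equation
with `K = 4`: every solution is `1/(C₁m + C₂) + C₃` or affine `C₁m + C₂`. -/
theorem discrete_schwarzian_K_four_solutions (u : ℤ → ℝ)
    (h1 : ∀ m : ℤ, u (m + 1) ≠ u m)
    (h2 : ∀ m : ℤ, u (m + 2) ≠ u m)
    (h3 : ∀ m : ℤ, u (m + 2) ≠ u (m + 1))
    (heq : ∀ m : ℤ, (u (m + 3) - u (m + 1)) * (u (m + 2) - u m)
        = 4 * (u (m + 3) - u (m + 2)) * (u (m + 1) - u m)) :
    (∃ C₁ C₂ C₃ : ℝ, C₁ ≠ 0 ∧ (∀ m : ℤ, C₁ * (m : ℝ) + C₂ ≠ 0) ∧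
        ∀ m : ℤ, u m = 1 / (C₁ * (m : ℝ) + C₂) + C₃) ∨
    (∃ C₁ C₂ : ℝ, C₁ ≠ 0 ∧ ∀ m : ℤ, u m = C₁ * (m : ℝ) + C₂) := by
  classical
  set d : ℤ → ℝ := fun m => u (m + 1) - u m with hdd
  have hd : ∀ m : ℤ, d m ≠ 0 := fun m => sub_ne_zero.mpr (h1 m)
  have key : ∀ m : ℤ, (d (m+2) + d (m+1)) * (d (m+1) + d m) = 4 * d (m+2) * d m := by
    intro m
    have h := heq m
    have e1 : (m:ℤ)+1+1 = m+2 := by ring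
    have e2 : (m:ℤ)+2+1 = m+3 := by ring
    simp only [hdd]
    rw [e1, e2]
    linear_combination h
  set r : ℤ → ℝ := fun m => d (m+1) / d m with hrr
  have rd : ∀ m : ℤ, d (m+1) = r m * d m := by
    intro m
    simp only [hrr]
    rw [div_mul_cancel₀ _ (hd m)]
  have rkey : ∀ m : ℤ, (r (m+1) + 1) * (r m + 1) = 4 * r (m+1) := by
    intro m
    have hk := key m
    rw [show (m:ℤ)+2 = (m+1)+1 from by ring, rd (m+1), rd m] at hk
    apply mul_right_cancel₀ (mul_ne_zero (hd (m+1)) (hd m))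
    rw [rd m]
    linear_combination hk
  by_cases hc : r 0 = 1
  · -- affine case
    right
    have fwd : ∀ m : ℤ, r m = 1 → r (m+1) = 1 := by
      intro m h
      have hk := rkey m
      rw [h] at hk
      linarith
    have bwd : ∀ m : ℤ, r (m+1) = 1 → r m = 1 := by
      intro m h
      have hk := rkey m
      rw [h] at hk
      linarith
    have hr1 : ∀ m : ℤ, r m = 1 := by
      intro m
      induction m using Int.induction_on with
      | zero => exact hc
      | succ n ih => exact fwd n ih
      | pred n ih =>
        refine bwd (-(n:ℤ)-1) ?_
        rw [show (-(n:ℤ)-1)+1 = -(n:ℤ) from by ring]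
        exact ih
    have hdc : ∀ m : ℤ, d m = d 0 := by
      intro m
      induction m using Int.induction_on with
      | zero => rfl
      | succ n ih => rw [rd (n:ℤ), hr1, one_mul, ih]
      | pred n ih =>
        have hs := rd (-(n:ℤ)-1)
        rw [hr1, one_mul, show (-(n:ℤ)-1)+1 = -(n:ℤ) from by ring] at hs
        rw [← hs]
        exact ih
    have hu : ∀ m : ℤ, u m = d 0 * (m:ℝ) + u 0 := by
      intro m
      induction m using Int.induction_on with
      | zero => simp
      | succ n ih =>
        have e : d (n:ℤ) = u ((n:ℤ)+1) - u (n:ℤ) := by simp only [hdd]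
        have h0 := hdc (n:ℤ)
        push_cast
        push_cast at ih
        linarith
      | pred n ih =>
        have e : d (-(n:ℤ)-1) = u ((-(n:ℤ)-1)+1) - u (-(n:ℤ)-1) := by simp only [hdd]
        rw [show (-(n:ℤ)-1)+1 = -(n:ℤ) from by ring] at e
        have h0 := hdc (-(n:ℤ)-1)
        push_cast
        push_cast at ih
        linarith
    exact ⟨d 0, u 0, hd 0, hu⟩
  · -- Möbius / reciprocal case
    left
    have pkey : ∀ m : ℤ, (r (m+1) - 1) * (r m - 1) = 2*(r (m+1) - 1) - 2*(r m - 1) := by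
      intro m
      linear_combination rkey m
    set a : ℝ := 2 / (r 0 - 1) with haa
    have hc0 : r 0 - 1 ≠ 0 := sub_ne_zero.mpr hc
    have hrm' : ∀ m : ℤ, r m * (a - (m:ℝ)) = a - (m:ℝ) + 2 := by
      intro m
      induction m using Int.induction_on with
      | zero =>
        simp only [haa, Int.cast_zero, sub_zero]
        field_simp
        ring
      | succ n ih =>
        have pk := pkey (n:ℤ)
        push_cast
        push_cast at ih
        linear_combination (-(a - (n:ℝ))/2) * pk + ((r ((n:ℤ)+1) + 1)/2) * ih
      | pred n ih =>
        have pk := pkey (-(n:ℤ)-1)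
        rw [show (-(n:ℤ)-1)+1 = -(n:ℤ) from by ring] at pk
        push_cast
        push_cast at ih
        linear_combination ((a + (n:ℝ))/2) * pk - ((r (-(n:ℤ)-1) - 3)/2) * ih
    have hane : ∀ m : ℤ, a - (m:ℝ) ≠ 0 := by
      intro m h
      have hm := hrm' m
      rw [h, mul_zero] at hm
      linarith
    have ha1 : ∀ m : ℤ, a + 1 - (m:ℝ) ≠ 0 := by
      intro m h
      have := hane (m-1)
      push_cast at this
      apply this
      linarith
    have ha2 : ∀ m : ℤ, a + 2 - (m:ℝ) ≠ 0 := by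
      intro m h
      have := hane (m-2)
      push_cast at this
      apply this
      linarith
    set c : ℝ := d 0 * ((a+1) * (a+2)) with hcc
    have hc' : c ≠ 0 := by
      have h1' : a + 1 ≠ 0 := by simpa using ha1 0
      have h2' : a + 2 ≠ 0 := by simpa using ha2 0
      exact mul_ne_zero (hd 0) (mul_ne_zero h1' h2')
    have hdm : ∀ m : ℤ, d m * ((a + 1 - (m:ℝ)) * (a + 2 - (m:ℝ))) = c := by
      intro m
      induction m using Int.induction_on with
      | zero => simp [hcc]
      | succ n ih =>
        have hstep := rd (n:ℤ)
        have hr := hrm' (n:ℤ)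
        push_cast
        push_cast at ih
        linear_combination ((a - (n:ℝ)) * (a + 1 - (n:ℝ))) * hstep
          + (d (n:ℤ) * (a + 1 - (n:ℝ))) * hr + ih
      | pred n ih =>
        have hstep := rd (-(n:ℤ)-1)
        rw [show (-(n:ℤ)-1)+1 = -(n:ℤ) from by ring] at hstep
        have hr := hrm' (-(n:ℤ)-1)
        push_cast at hr
        push_cast
        push_cast at ih
        linear_combination ih - ((a + (n:ℝ) + 1) * (a + (n:ℝ) + 2)) * hstep
          - (d (-(n:ℤ)-1) * (a + (n:ℝ) + 2)) * hr
    have hdiv : ∀ m : ℤ, d m = c / ((a + 1 - (m:ℝ)) * (a + 2 - (m:ℝ))) := by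
      intro m
      rw [eq_div_iff (mul_ne_zero (ha1 m) (ha2 m))]
      exact hdm m
    set C3 : ℝ := u 0 - c / (a + 2) with hC3
    have hu : ∀ m : ℤ, u m = c / (a + 2 - (m:ℝ)) + C3 := by
      intro m
      induction m using Int.induction_on with
      | zero =>
        rw [hC3]
        push_cast
        ring
      | succ n ih =>
        have e2 : u ((n:ℤ)+1) = d (n:ℤ) + u (n:ℤ) := by
          simp only [hdd]
          ring
        have hx1 := ha1 (n:ℤ)
        have hx2 := ha2 (n:ℤ)
        push_cast at hx1 hx2
        have key2 : c / ((a+1-(n:ℝ)) * (a+2-(n:ℝ))) = c/(a+1-(n:ℝ)) - c/(a+2-(n:ℝ)) := by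
          rw [div_sub_div _ _ hx1 hx2]
          congr 1
          ring
        rw [e2, hdiv (n:ℤ), ih]
        push_cast
        rw [show a + 2 - ((n:ℝ) + 1) = a + 1 - (n:ℝ) from by ring]
        linarith [key2]
      | pred n ih =>
        have e2 : u (-(n:ℤ)) = d (-(n:ℤ)-1) + u (-(n:ℤ)-1) := by
          simp only [hdd]
          rw [show (-(n:ℤ)-1)+1 = -(n:ℤ) from by ring]
          ring
        have e4 : u (-(n:ℤ)-1) = u (-(n:ℤ)) - d (-(n:ℤ)-1) := by linarith [e2]
        have hx1 : a + 2 + (n:ℝ) ≠ 0 := by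
          have := ha1 (-(n:ℤ)-1)
          push_cast at this
          intro h; apply this; linarith
        have hx2 : a + 3 + (n:ℝ) ≠ 0 := by
          have := ha2 (-(n:ℤ)-1)
          push_cast at this
          intro h; apply this; linarith
        have key2 : c / ((a+2+(n:ℝ)) * (a+3+(n:ℝ))) = c/(a+2+(n:ℝ)) - c/(a+3+(n:ℝ)) := by
          rw [div_sub_div _ _ hx1 hx2]
          congr 1
          ring
        rw [e4, ih, hdiv (-(n:ℤ)-1)]
        push_cast
        rw [show a + 1 - (-(n:ℝ) - 1) = a + 2 + (n:ℝ) from by ring,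
            show a + 2 - (-(n:ℝ) - 1) = a + 3 + (n:ℝ) from by ring,
            show a + 2 - -(n:ℝ) = a + 2 + (n:ℝ) from by ring]
        linarith [key2]
    refine ⟨-1/c, (a+2)/c, C3, div_ne_zero (by norm_num) hc', ?_, ?_⟩
    · intro m
      rw [show -1/c * (m:ℝ) + (a+2)/c = (a + 2 - (m:ℝ)) / c from by ring]
      exact div_ne_zero (ha2 m) hc'
    · intro m
      rw [hu m, show -1/c * (m:ℝ) + (a+2)/c = (a + 2 - (m:ℝ)) / c from by ring,
          one_div_div]
end

section
/- Let 0 < K < 4, set φ = arccos(√K / 2), and let C₁ ≠ 0, C₂, C₃ be real constants such that cos(φm + C₂) ≠ 0 for all m ∈ ℤ. Then the sequence u(m) = C₁·tan(φm + C₂) + C₃ satisfies (u(m+3) − u(m+1))·(u(m+2) − u(m)) = K·(u(m+3) − u(m+2))·(u(m+1) − u(m)) for all m ∈ ℤ. -/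
private lemma tan_sub_eq (x y : ℝ) (hx : Real.cos x ≠ 0) (hy : Real.cos y ≠ 0) :
    Real.tan x - Real.tan y = Real.sin (x - y) / (Real.cos x * Real.cos y) := by
  rw [Real.sin_sub, Real.tan_eq_sin_div_cos, Real.tan_eq_sin_div_cos]
  field_simp

private lemma tan_schwarzian_aux (a b : ℝ)
    (h0 : Real.cos a ≠ 0) (h1 : Real.cos (a + b) ≠ 0)
    (h2 : Real.cos (a + b + b) ≠ 0) (h3 : Real.cos (a + b + b + b) ≠ 0) :
    (Real.tan (a + b + b + b) - Real.tan (a + b)) * (Real.tan (a + b + b) - Real.tan a)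
      = 4 * Real.cos b ^ 2 * (Real.tan (a + b + b + b) - Real.tan (a + b + b))
        * (Real.tan (a + b) - Real.tan a) := by
  have d31 := tan_sub_eq (a + b + b + b) (a + b) h3 h1
  have d20 := tan_sub_eq (a + b + b) a h2 h0
  have d32 := tan_sub_eq (a + b + b + b) (a + b + b) h3 h2
  have d10 := tan_sub_eq (a + b) a h1 h0
  rw [show a + b + b + b - (a + b) = b + b by ring] at d31
  rw [show a + b + b - a = b + b by ring] at d20
  rw [show a + b + b + b - (a + b + b) = b by ring] at d32
  rw [show a + b - a = b by ring] at d10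
  rw [d31, d20, d32, d10, show b + b = b + b from rfl, Real.sin_add]
  field_simp
  ring

/-- for `0 < K < 4` and `φ = arccos(√K/2)`, the sequence
`u(m) = C₁·tan(φm + C₂) + C₃` solves the four-point discrete Schwarzian equation. -/
theorem discrete_schwarzian_solution_K_mid (K C₁ C₂ C₃ : ℝ)
    (hK0 : 0 < K) (hK4 : K < 4) (hC₁ : C₁ ≠ 0)
    (hcos : ∀ m : ℤ, Real.cos (Real.arccos (Real.sqrt K / 2) * (m : ℝ) + C₂) ≠ 0) :
    let φ : ℝ := Real.arccos (Real.sqrt K / 2)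
    let u : ℤ → ℝ := fun m => C₁ * Real.tan (φ * (m : ℝ) + C₂) + C₃
    ∀ m : ℤ, (u (m + 3) - u (m + 1)) * (u (m + 2) - u m)
        = K * (u (m + 3) - u (m + 2)) * (u (m + 1) - u m) := by
  intro φ u m
  have hs2 : Real.sqrt K ≤ 2 := by
    nlinarith [Real.sq_sqrt hK0.le, Real.sqrt_nonneg K]
  have hq : Real.cos φ = Real.sqrt K / 2 :=
    Real.cos_arccos (by nlinarith [Real.sqrt_nonneg K]) (by linarith)
  have hK : K = 4 * Real.cos φ ^ 2 := by
    rw [hq, div_pow, Real.sq_sqrt hK0.le]; ring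
  have h0 : Real.cos (φ * (m : ℝ) + C₂) ≠ 0 := hcos m
  have h1 : Real.cos ((φ * (m : ℝ) + C₂) + φ) ≠ 0 := by
    rw [show (φ * (m : ℝ) + C₂) + φ = φ * ((m : ℝ) + 1) + C₂ by ring]
    simpa using hcos (m + 1)
  have h2 : Real.cos ((φ * (m : ℝ) + C₂) + φ + φ) ≠ 0 := by
    rw [show (φ * (m : ℝ) + C₂) + φ + φ = φ * ((m : ℝ) + 2) + C₂ by ring]
    simpa using hcos (m + 2)
  have h3 : Real.cos ((φ * (m : ℝ) + C₂) + φ + φ + φ) ≠ 0 := by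
    rw [show (φ * (m : ℝ) + C₂) + φ + φ + φ = φ * ((m : ℝ) + 3) + C₂ by ring]
    simpa using hcos (m + 3)
  have key := tan_schwarzian_aux (φ * (m : ℝ) + C₂) φ h0 h1 h2 h3
  show (C₁ * Real.tan (φ * ((m + 3 : ℤ) : ℝ) + C₂) + C₃ - (C₁ * Real.tan (φ * ((m + 1 : ℤ) : ℝ) + C₂) + C₃))
      * (C₁ * Real.tan (φ * ((m + 2 : ℤ) : ℝ) + C₂) + C₃ - (C₁ * Real.tan (φ * ((m : ℤ) : ℝ) + C₂) + C₃))
      = K * (C₁ * Real.tan (φ * ((m + 3 : ℤ) : ℝ) + C₂) + C₃ - (C₁ * Real.tan (φ * ((m + 2 : ℤ) : ℝ) + C₂) + C₃))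
      * (C₁ * Real.tan (φ * ((m + 1 : ℤ) : ℝ) + C₂) + C₃ - (C₁ * Real.tan (φ * ((m : ℤ) : ℝ) + C₂) + C₃))
  push_cast
  rw [show φ * ((m : ℝ) + 3) + C₂ = (φ * (m : ℝ) + C₂) + φ + φ + φ by ring,
      show φ * ((m : ℝ) + 2) + C₂ = (φ * (m : ℝ) + C₂) + φ + φ by ring,
      show φ * ((m : ℝ) + 1) + C₂ = (φ * (m : ℝ) + C₂) + φ by ring]
  linear_combination (C₁ ^ 2) * key
    - (C₁ ^ 2 * (Real.tan ((φ * (m : ℝ) + C₂) + φ + φ + φ) - Real.tan ((φ * (m : ℝ) + C₂) + φ + φ))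
        * (Real.tan ((φ * (m : ℝ) + C₂) + φ) - Real.tan (φ * (m : ℝ) + C₂))) * hK
end

section
/- Let K > 4, set ψ = (1/2)·ln((K − 2 + √(K² − 4K))/2), and let C₁ ≠ 0, C₂, C₃ be real constants with ψm + C₂ ≠ 0 for all m ∈ ℤ (this is automatic when C₂ is irrationally related to ψ; it suffices to assume it). Then the sequence u(m) = C₁·tanh(ψm + C₂) + C₃ satisfies (u(m+3) − u(m+1))·(u(m+2) − u(m)) = K·(u(m+3) − u(m+2))·(u(m+1) − u(m)) for all m ∈ ℤ. -/
lemma tanh_sub_eq (x y : ℝ) :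
    Real.tanh x - Real.tanh y = Real.sinh (x - y) / (Real.cosh x * Real.cosh y) := by
  rw [Real.tanh_eq_sinh_div_cosh, Real.tanh_eq_sinh_div_cosh, Real.sinh_sub]
  have hx := Real.cosh_pos x
  have hy := Real.cosh_pos y
  field_simp

/-- for `K > 4` and `ψ = (1/2)·ln((K − 2 + √(K² − 4K))/2)`, the
sequence `u(m) = C₁·tanh(ψm + C₂) + C₃` solves the four-point discrete Schwarzian
equation (assuming `ψm + C₂ ≠ 0` for all `m`). -/
theorem discrete_schwarzian_solution_K_big (K C₁ C₂ C₃ : ℝ)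
    (hK : 4 < K) (hC₁ : C₁ ≠ 0)
    (hne : ∀ m : ℤ,
      (1/2) * Real.log ((K - 2 + Real.sqrt (K ^ 2 - 4 * K)) / 2) * (m : ℝ) + C₂ ≠ 0) :
    let ψ : ℝ := (1/2) * Real.log ((K - 2 + Real.sqrt (K ^ 2 - 4 * K)) / 2)
    let u : ℤ → ℝ := fun m => C₁ * Real.tanh (ψ * (m : ℝ) + C₂) + C₃
    ∀ m : ℤ, (u (m + 3) - u (m + 1)) * (u (m + 2) - u m)
        = K * (u (m + 3) - u (m + 2)) * (u (m + 1) - u m) := by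
  intro ψ u m
  set s := Real.sqrt (K ^ 2 - 4 * K) with hs_def
  have hsq : s ^ 2 = K ^ 2 - 4 * K := Real.sq_sqrt (by nlinarith)
  have hs0 : 0 ≤ s := Real.sqrt_nonneg _
  have hμpos : 0 < (K - 2 + s) / 2 := by nlinarith
  have hexp : Real.exp (2 * ψ) = (K - 2 + s) / 2 := by
    have : 2 * ψ = Real.log ((K - 2 + s) / 2) := by simp [ψ, hs_def]
    rw [this, Real.exp_log hμpos]
  have hcosh2 : Real.cosh (2 * ψ) = (K - 2) / 2 := by
    rw [Real.cosh_eq, hexp, Real.exp_neg, hexp]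
    have hKs : K - 2 + s ≠ 0 := by nlinarith
    field_simp
    nlinarith [hsq]
  have hc : Real.cosh ψ ^ 2 = K / 4 := by
    have h1 := Real.cosh_two_mul ψ
    have h2 := Real.cosh_sq ψ
    nlinarith
  -- difference formula
  have key : ∀ p q : ℤ, u p - u q =
      C₁ * Real.sinh (((p : ℝ) - q) * ψ) /
        (Real.cosh (ψ * p + C₂) * Real.cosh (ψ * q + C₂)) := by
    intro p q
    show C₁ * Real.tanh (ψ * p + C₂) + C₃ - (C₁ * Real.tanh (ψ * q + C₂) + C₃) = _
    have : C₁ * Real.tanh (ψ * p + C₂) + C₃ - (C₁ * Real.tanh (ψ * q + C₂) + C₃)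
        = C₁ * (Real.tanh (ψ * p + C₂) - Real.tanh (ψ * q + C₂)) := by ring
    rw [this, tanh_sub_eq]
    have harg : ψ * p + C₂ - (ψ * q + C₂) = ((p : ℝ) - q) * ψ := by ring
    rw [harg, mul_div_assoc]
  rw [key, key, key, key]
  have e3 : (((m + 3 : ℤ) : ℝ) - ((m + 1 : ℤ) : ℝ)) = 2 := by push_cast; ring
  have e2 : (((m + 2 : ℤ) : ℝ) - ((m : ℤ) : ℝ)) = 2 := by push_cast; ring
  have e1 : (((m + 3 : ℤ) : ℝ) - ((m + 2 : ℤ) : ℝ)) = 1 := by push_cast; ring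
  have e0 : (((m + 1 : ℤ) : ℝ) - ((m : ℤ) : ℝ)) = 1 := by push_cast; ring
  rw [e3, e2, e1, e0, one_mul]
  have h0 := Real.cosh_pos (ψ * ((m : ℤ) : ℝ) + C₂)
  have h1 := Real.cosh_pos (ψ * (((m + 1 : ℤ)) : ℝ) + C₂)
  have h2 := Real.cosh_pos (ψ * (((m + 2 : ℤ)) : ℝ) + C₂)
  have h3 := Real.cosh_pos (ψ * (((m + 3 : ℤ)) : ℝ) + C₂)
  have hsinh2 : Real.sinh (2 * ψ) = 2 * Real.sinh ψ * Real.cosh ψ :=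
    Real.sinh_two_mul ψ
  push_cast
  field_simp
  rw [hsinh2]
  linear_combination (4 * Real.sinh ψ ^ 2) * hc
end

section
/- Let h > 0, x₀ ∈ ℝ, A, B ∈ ℝ, and set ω = arctan(h/2)/(h/2) and x_m = x₀ + mh. Then the sequence u(m) = A·cos(ω·x_m) + B·sin(ω·x_m) satisfies the discrete harmonic oscillator scheme (u(m+2) − 2u(m+1) + u(m))/h² + (u(m+2) + 2u(m+1) + u(m))/4 = 0 for all m ∈ ℤ. -/
/-- with `ω = arctan(h/2)/(h/2)` and `x_m = x₀ + mh`, the sequence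
`u(m) = A·cos(ω·x_m) + B·sin(ω·x_m)` solves the invariant discrete harmonic
oscillator scheme. -/
theorem discrete_harmonic_oscillator_solution (h x₀ A B : ℝ) (hh : 0 < h) :
    let ω : ℝ := Real.arctan (h / 2) / (h / 2)
    let u : ℤ → ℝ := fun m => A * Real.cos (ω * (x₀ + (m : ℝ) * h))
      + B * Real.sin (ω * (x₀ + (m : ℝ) * h))
    ∀ m : ℤ, (u (m + 2) - 2 * u (m + 1) + u m) / h ^ 2
        + (u (m + 2) + 2 * u (m + 1) + u m) / 4 = 0 := by
  intro ω u m
  have hne : h ≠ 0 := ne_of_gt hh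
  have hωh : ω * h = 2 * Real.arctan (h / 2) := by
    show Real.arctan (h / 2) / (h / 2) * h = _
    field_simp
  have hcos2 : Real.cos (Real.arctan (h / 2)) ^ 2 = 1 / (1 + (h / 2) ^ 2) := by
    rw [Real.cos_sq_arctan]
  have hc : Real.cos (ω * h) = (1 - (h / 2) ^ 2) / (1 + (h / 2) ^ 2) := by
    rw [hωh, Real.cos_two_mul, hcos2]
    have : (0:ℝ) < 1 + (h / 2) ^ 2 := by positivity
    field_simp
    ring
  set a := ω * (x₀ + ((m : ℝ) + 1) * h) with ha
  have e2 : ω * (x₀ + ((m : ℝ) + 2) * h) = a + ω * h := by rw [ha]; ring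
  have e0 : ω * (x₀ + (m : ℝ) * h) = a - ω * h := by rw [ha]; ring
  show (u (m + 2) - 2 * u (m + 1) + u m) / h ^ 2
      + (u (m + 2) + 2 * u (m + 1) + u m) / 4 = 0
  have hu2 : u (m + 2) = A * Real.cos (a + ω * h) + B * Real.sin (a + ω * h) := by
    simp only [u]
    push_cast
    rw [e2]
  have hu1 : u (m + 1) = A * Real.cos a + B * Real.sin a := by
    simp only [u]
    push_cast
    rw [ha]
  have hu0 : u m = A * Real.cos (a - ω * h) + B * Real.sin (a - ω * h) := by
    simp only [u]
    rw [e0]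
  rw [hu2, hu1, hu0, Real.cos_add, Real.sin_add, Real.cos_sub, Real.sin_sub, hc]
  have hpos : (0:ℝ) < 1 + (h / 2) ^ 2 := by positivity
  field_simp
  ring
end

section
/- Let h > 0 and let u : ℤ → ℝ satisfy the discrete harmonic oscillator scheme (u(m+2) − 2u(m+1) + u(m))/h² + (u(m+2) + 2u(m+1) + u(m))/4 = 0 for all m ∈ ℤ. Then the function J(m) = ((u(m+1) − u(m))/h)² + ((u(m+1) + u(m))/2)² is independent of m, i.e., J(m+1) = J(m) for all m ∈ ℤ. -/
/-- for the discrete harmonic oscillator scheme on a uniform mesh of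
step `h > 0`, the discrete energy
`J(m) = ((u(m+1) − u(m))/h)² + ((u(m+1) + u(m))/2)²` is a first integral. -/
theorem discrete_harmonic_oscillator_energy (h : ℝ) (hh : 0 < h) (u : ℤ → ℝ)
    (heq : ∀ m : ℤ, (u (m + 2) - 2 * u (m + 1) + u m) / h ^ 2
        + (u (m + 2) + 2 * u (m + 1) + u m) / 4 = 0) :
    ∀ m : ℤ,
      ((u (m + 1 + 1) - u (m + 1)) / h) ^ 2 + ((u (m + 1 + 1) + u (m + 1)) / 2) ^ 2
        = ((u (m + 1) - u m) / h) ^ 2 + ((u (m + 1) + u m) / 2) ^ 2 := by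
  intro m
  have key := heq m
  have h2 : (m : ℤ) + 1 + 1 = m + 2 := by ring
  rw [h2]
  have hne : h ≠ 0 := ne_of_gt hh
  field_simp at key ⊢
  linear_combination (u (m + 2) - u m) * key
end
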